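/- For every integer q ≥ 1, the series ∑_{n≥0} a_{q,n}·(n+q)(n+q−1)·2^{−(n+q)} converges and equals 4(2^{2q+1} − (3+q)·2^q + 1). (This is the value F_{ss}(1,0) of the second derivative in s of F(s,0) = ∑_{w∈χ(0^q)} (s/2)^{ℓ(w)+q} at s = 1.) -/

import Mathlib

/-- A binary word (`false` = 0, `true` = 1) lies in `χ(0^q)` iff it contains no block of `q`
consecutive 0s and its rightmost digit is 1 (the empty word is allowed). -/
def goodWord (q : ℕ) (w : List Bool) : Prop :=
  ¬ (List.replicate q false <:+: w) ∧ ∀ h : w ≠ [], w.getLast h = true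

/-- `a q n` is the number of words of length `n` in `χ(0^q)`. -/
noncomputable def wordCount (q n : ℕ) : ℕ :=
  Nat.card {w : Fin n → Bool // goodWord q (List.ofFn w)}

open List Finset

instance goodWordDec (q : ℕ) : DecidablePred (goodWord q) := fun w =>
  if h : w = [] then
    decidable_of_iff (¬ (List.replicate q false <:+: w))
      (by constructor
          · intro H; exact ⟨H, fun h' => absurd h h'⟩
          · exact fun H => H.1)
  else
    decidable_of_iff (¬ (List.replicate q false <:+: w) ∧ w.getLast h = true)
      (by constructor
          · exact fun ⟨H1, H2⟩ => ⟨H1, fun _ => H2⟩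
          · exact fun ⟨H1, H2⟩ => ⟨H1, H2 h⟩)

/-- The finset of good words of length `n`. -/
def GF (q n : ℕ) : Finset (List Bool) :=
  ((Finset.univ : Finset (Fin n → Bool)).image List.ofFn).filter (goodWord q)

lemma mem_GF {q n : ℕ} {l : List Bool} : l ∈ GF q n ↔ l.length = n ∧ goodWord q l := by
  simp only [GF, Finset.mem_filter, Finset.mem_image, Finset.mem_univ, true_and]
  constructor
  · rintro ⟨⟨w, rfl⟩, h⟩; exact ⟨by simp, h⟩
  · rintro ⟨rfl, h⟩
    exact ⟨⟨fun i => l[(i : ℕ)], List.ofFn_getElem⟩, h⟩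

lemma wordCount_eq_card_GF (q n : ℕ) : wordCount q n = (GF q n).card := by
  rw [wordCount, Nat.card_eq_fintype_card, Fintype.card_subtype, GF, Finset.filter_image,
    Finset.card_image_of_injective _ (List.ofFn_injective)]

/-- Positional characterization of containing a block of `q` zeros. -/
lemma replicate_infix_iff {q : ℕ} {w : List Bool} :
    List.replicate q false <:+: w ↔
      ∃ i, i + q ≤ w.length ∧ ∀ j < q, w[i + j]? = some false := by
  constructor
  · rintro ⟨s, t, rfl⟩
    refine ⟨s.length, by simp only [List.length_append, List.length_replicate]; omega,
      fun j hj => ?_⟩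
    rw [List.append_assoc, List.getElem?_append_right (Nat.le_add_right _ _),
      Nat.add_sub_cancel_left, List.getElem?_append_left (by simpa using hj),
      List.getElem?_replicate, if_pos hj]
  · rintro ⟨i, hi, hall⟩
    have hrep : (w.drop i).take q = List.replicate q false := by
      rw [List.eq_replicate_iff]
      constructor
      · simp; omega
      · intro b hb
        obtain ⟨j, hj, hbj⟩ := List.mem_iff_getElem.mp hb
        have hjq : j < q := by
          simp only [List.length_take, List.length_drop, lt_min_iff] at hj
          omega
        have hlt : i + j < w.length := by
          simp only [List.length_take, List.length_drop, lt_min_iff] at hj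
          omega
        have h1 : b = w[i + j]'hlt := by
          rw [← hbj, List.getElem_take, List.getElem_drop]
        have h2 := hall j hjq
        rw [List.getElem?_eq_getElem hlt] at h2
        rw [h1]
        exact Option.some.inj h2
    rw [← hrep]
    exact ((List.take_prefix q _).isInfix).trans ((List.drop_suffix i w).isInfix)

lemma goodWord_append {q k : ℕ} {v : List Bool} (hv : goodWord q v) (hk : k < q) :
    goodWord q (v ++ (List.replicate k false ++ [true])) := by
  constructor
  · rw [replicate_infix_iff]
    rintro ⟨i, hi, hall⟩
    have hlen : (v ++ (List.replicate k false ++ [true])).length = v.length + k + 1 := by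
      simp only [List.length_append, List.length_replicate, List.length_singleton]; omega
    rw [hlen] at hi
    have htrue : (v ++ (List.replicate k false ++ [true]))[v.length + k]? = some true := by
      rw [List.getElem?_append_right (Nat.le_add_right _ _), Nat.add_sub_cancel_left,
        List.getElem?_append_right (by simp)]
      simp
    have h1 : i + q ≤ v.length + k := by
      by_contra h
      push_neg at h
      have hjq : v.length + k - i < q := by omega
      have := hall (v.length + k - i) hjq
      rw [show i + (v.length + k - i) = v.length + k by omega, htrue] at this
      simp at this
    by_cases h2 : i + q ≤ v.length
    · apply hv.1
      rw [replicate_infix_iff]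
      refine ⟨i, h2, fun j hj => ?_⟩
      have := hall j hj
      rwa [List.getElem?_append_left (by omega)] at this
    · push_neg at h2
      have hv0 : v.length ≠ 0 := by
        intro h0
        omega
      have hne : v ≠ [] := by
        intro h; rw [h] at hv0; exact hv0 rfl
      have hfalse := hall (v.length - 1 - i) (by omega)
      rw [show i + (v.length - 1 - i) = v.length - 1 by omega,
        List.getElem?_append_left (by omega),
        List.getElem?_eq_getElem (by omega)] at hfalse
      have hlast := hv.2 hne
      rw [List.getLast_eq_getElem] at hlast
      rw [hlast] at hfalse
      simp at hfalse
  · intro h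
    simp [List.getLast_append]

lemma goodWord_decomp {q : ℕ} {l : List Bool} (hl : goodWord q l) (hne : l ≠ []) :
    ∃ k v, k < q ∧ goodWord q v ∧ v.length + (k + 1) = l.length ∧
      l = v ++ (List.replicate k false ++ [true]) := by
  classical
  have hlast := hl.2 hne
  set w' := l.dropLast with hw'
  have hldec : l = w' ++ [true] := by
    conv_lhs => rw [← List.dropLast_append_getLast hne]
    rw [hlast]
  set t := w'.reverse.takeWhile (fun b => b == false) with ht
  set d := w'.reverse.dropWhile (fun b => b == false) with hd
  set k := t.length with hk
  have htd : t ++ d = w'.reverse := List.takeWhile_append_dropWhile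
  have htrep : t = List.replicate k false := by
    rw [List.eq_replicate_iff]
    exact ⟨rfl, fun b hb => by simpa using List.mem_takeWhile_imp hb⟩
  set v := d.reverse with hv
  have hw'd : w' = v ++ List.replicate k false := by
    have h2 := congrArg List.reverse htd
    rw [List.reverse_append, List.reverse_reverse] at h2
    rw [← h2, hv, htrep, List.reverse_replicate]
  have hldec2 : l = v ++ (List.replicate k false ++ [true]) := by
    rw [hldec, hw'd, List.append_assoc]
  have hrepinf : List.replicate k false <:+: l :=
    ⟨v, [true], by rw [hldec2]; simp [List.append_assoc]⟩
  have hkq : k < q := by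
    by_contra h
    push_neg at h
    apply hl.1
    have hsplit : List.replicate q false ++ List.replicate (k - q) false
        = List.replicate k false := by
      rw [← List.replicate_add]; congr 1; omega
    have hqk : List.replicate q false <:+: List.replicate k false :=
      ⟨[], List.replicate (k - q) false, by simpa using hsplit⟩
    exact hqk.trans hrepinf
  have hvgood : goodWord q v := by
    constructor
    · intro hbad
      exact hl.1 (hbad.trans ⟨[], List.replicate k false ++ [true], by rw [hldec2]; simp⟩)
    · intro hvne
      have hdne : d ≠ [] := by
        intro h; rw [hv, h] at hvne; exact hvne rfl
      have hh := List.head_dropWhile_not (fun b => b == false) (l := w'.reverse) (by rwa [← hd])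
      have hgl : v.getLast hvne = d.head hdne := List.getLast_reverse _
      have hht : d.head hdne = true := by
        have h2 : (d.head hdne == false) = false := hh
        simpa using h2
      exact hgl.trans hht
  refine ⟨k, v, hkq, hvgood, ?_, hldec2⟩
  rw [hldec2]
  simp only [List.length_append, List.length_replicate, List.length_singleton]
  all_goals omega

lemma decomp_inj_aux {q k₁ k₂ : ℕ} {v₁ v₂ : List Bool} (h1 : goodWord q v₁)
    (h : v₁ ++ (List.replicate k₁ false ++ [true]) = v₂ ++ (List.replicate k₂ false ++ [true]))
    (hlt : k₁ < k₂) : False := by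
  have h' : List.replicate k₁ false ++ v₁.reverse = List.replicate k₂ false ++ v₂.reverse := by
    have h2 := congrArg List.reverse h
    simpa [List.reverse_append, List.reverse_replicate, List.append_assoc] using h2
  have hlen : v₁.length + k₁ = v₂.length + k₂ := by
    have := congrArg List.length h
    simp only [List.length_append, List.length_replicate, List.length_singleton] at this
    omega
  have hv1ne : v₁ ≠ [] := by
    intro h0
    rw [h0] at hlen
    simp at hlen
    omega
  have hv1r : v₁.reverse ≠ [] := by simpa using hv1ne
  have hpos : 0 < v₁.reverse.length := List.length_pos_iff.mpr hv1r
  have hL : (List.replicate k₁ false ++ v₁.reverse)[k₁]? = some true := by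
    rw [List.getElem?_append_right (by simp), List.length_replicate, Nat.sub_self,
      List.getElem?_eq_getElem hpos]
    have h0 : v₁.reverse[0]'hpos = true := by
      rw [List.getElem_reverse]
      have hgl := h1.2 hv1ne
      rw [List.getLast_eq_getElem] at hgl
      simpa using hgl
    rw [h0]
  have hR : (List.replicate k₂ false ++ v₂.reverse)[k₁]? = some false := by
    rw [List.getElem?_append_left (by simpa using hlt), List.getElem?_replicate, if_pos hlt]
  rw [h', hR] at hL
  simp at hL

lemma GF_card_succ {q : ℕ} (n : ℕ) :
    (GF q (n+1)).card = ∑ k ∈ Finset.range q, if k ≤ n then (GF q (n - k)).card else 0 := by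
  classical
  have hGF : GF q (n+1) = (Finset.range q).biUnion (fun k =>
      if k ≤ n then (GF q (n - k)).image
        (fun v => v ++ (List.replicate k false ++ [true])) else ∅) := by
    ext l
    simp only [Finset.mem_biUnion, Finset.mem_range]
    constructor
    · intro hl
      rw [mem_GF] at hl
      obtain ⟨hlen, hgood⟩ := hl
      obtain ⟨k, v, hkq, hvg, hvl, hdec⟩ := goodWord_decomp hgood
        (by intro h; rw [h] at hlen; simp at hlen)

      refine ⟨k, hkq, ?_⟩
      rw [if_pos (by omega), Finset.mem_image]
      exact ⟨v, mem_GF.mpr ⟨by omega, hvg⟩, hdec.symm⟩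
    · rintro ⟨k, hkq, hl⟩
      by_cases hkn : k ≤ n
      · rw [if_pos hkn, Finset.mem_image] at hl
        obtain ⟨v, hvmem, rfl⟩ := hl
        rw [mem_GF] at hvmem ⊢
        constructor
        · simp only [List.length_append, List.length_replicate, List.length_singleton, hvmem.1]
          omega
        · exact goodWord_append hvmem.2 hkq
      · rw [if_neg hkn] at hl
        simp at hl
  rw [hGF, Finset.card_biUnion]
  · apply Finset.sum_congr rfl
    intro k _
    by_cases hkn : k ≤ n
    · rw [if_pos hkn, if_pos hkn,
        Finset.card_image_of_injective _ (List.append_left_injective _)]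
    · simp [hkn]
  · intro k₁ _ k₂ _ hne
    apply Finset.disjoint_left.mpr
    intro l hl1 hl2
    beta_reduce at hl1 hl2
    by_cases hk1 : k₁ ≤ n
    case neg => rw [if_neg hk1] at hl1; simp at hl1
    by_cases hk2 : k₂ ≤ n
    case neg => rw [if_neg hk2] at hl2; simp at hl2
    rw [if_pos hk1, Finset.mem_image] at hl1
    rw [if_pos hk2, Finset.mem_image] at hl2
    obtain ⟨v₁, hv₁, he₁⟩ := hl1
    obtain ⟨v₂, hv₂, he₂⟩ := hl2
    have heq := he₁.trans he₂.symm
    rcases lt_or_gt_of_ne hne with h | h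
    · exact decomp_inj_aux (mem_GF.mp hv₁).2 heq h
    · exact decomp_inj_aux (mem_GF.mp hv₂).2 heq.symm h

lemma GF_zero_card {q : ℕ} (hq : 1 ≤ q) : (GF q 0).card = 1 := by
  have : GF q 0 = {([] : List Bool)} := by
    ext l
    rw [mem_GF, Finset.mem_singleton]
    constructor
    · rintro ⟨hlen, _⟩
      exact List.length_eq_zero_iff.mp hlen
    · rintro rfl
      refine ⟨rfl, ?_, fun h => absurd rfl h⟩
      intro hinf
      have := hinf.length_le
      simp at this
      omega
  rw [this]
  rfl
noncomputable def lam (q : ℕ) : ℝ := 2 - (1/2) ^ (q + 1)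

lemma lam_lt_two (q : ℕ) : lam q < 2 := by
  have : (0:ℝ) < (1/2)^(q+1) := by positivity
  simp only [lam]; linarith

lemma lam_ge (q : ℕ) : (3/2 : ℝ) ≤ lam q := by
  have h : (1/2:ℝ)^(q+1) ≤ (1/2:ℝ)^1 :=
    pow_le_pow_of_le_one (by norm_num) (by norm_num) (by omega)
  simp only [lam, pow_one] at h ⊢
  linarith

lemma lam_pos (q : ℕ) : (0:ℝ) < lam q := lt_of_lt_of_le (by norm_num) (lam_ge q)

lemma lam_geom (q : ℕ) : ∑ k ∈ Finset.range q, ((lam q)⁻¹) ^ (k + 1) ≤ 1 := by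
  set L := lam q with hLdef
  have hL32 : (3/2:ℝ) ≤ L := lam_ge q
  have hL2 : L ≤ 2 := le_of_lt (lam_lt_two q)
  have hL0 : (0:ℝ) < L := lam_pos q
  set x := L⁻¹ with hxdef
  have hx0 : (0:ℝ) < x := by positivity
  have hx1 : x < 1 := by
    rw [hxdef, inv_lt_one_iff₀]
    right; linarith
  have key : (2 - L) * L ^ q ≤ 1 := by
    have h1 : L ^ q ≤ 2 ^ q := pow_le_pow_left₀ (le_of_lt hL0) hL2 q
    have h2 : (2 - L) = (1/2:ℝ)^(q+1) := by simp only [hLdef, lam]; ring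
    calc (2-L) * L^q ≤ (1/2:ℝ)^(q+1) * 2^q := by
          rw [h2]; exact mul_le_mul_of_nonneg_left h1 (by positivity)
      _ = 1/2 := by
          rw [pow_succ, mul_comm ((1/2:ℝ)^q) (1/2:ℝ), mul_assoc, ← mul_pow]
          norm_num
      _ ≤ 1 := by norm_num
  have hkey2 : 2 * x - 1 ≤ x^(q+1) := by
    have hLq1 : (0:ℝ) < L^(q+1) := by positivity
    rw [hxdef, inv_pow, ← sub_nonneg]
    have expand : (L^(q+1))⁻¹ - (2 * L⁻¹ - 1) = (1 - (2 - L) * L^q) / L^(q+1) := by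
      field_simp
      ring
    rw [expand]
    apply div_nonneg _ (le_of_lt hLq1)
    linarith
  have hsum : ∑ k ∈ Finset.range q, x ^ (k+1) = x * ((x^q - 1)/(x - 1)) := by
    rw [← geom_sum_eq (ne_of_lt hx1), Finset.mul_sum]
    apply Finset.sum_congr rfl
    intro k _
    rw [pow_succ]; ring
  rw [hsum]
  have h1x : (0:ℝ) < 1 - x := by linarith
  have heq : x * ((x^q - 1)/(x-1)) = (x - x^(q+1)) / (1 - x) := by
    rw [pow_succ]
    have hne : x - 1 ≠ 0 := by linarith
    have hne2 : (1:ℝ) - x ≠ 0 := by linarith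
    field_simp
    ring
  rw [heq, div_le_one h1x]
  linarith

lemma card_GF_le (q : ℕ) (hq : 1 ≤ q) : ∀ n, ((GF q n).card : ℝ) ≤ lam q ^ n := by
  intro n
  induction n using Nat.strong_induction_on with
  | _ n ih =>
    match n with
    | 0 => rw [GF_zero_card hq]; simp
    | Nat.succ m =>
      have hL0 := lam_pos q
      have hcast : (((GF q (m+1)).card : ℕ) : ℝ)
          = ∑ k ∈ Finset.range q, if k ≤ m then ((GF q (m - k)).card : ℝ) else 0 := by
        rw [GF_card_succ m, Nat.cast_sum]
        apply Finset.sum_congr rfl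
        intro k _
        split_ifs <;> simp
      rw [hcast]
      calc (∑ k ∈ Finset.range q, if k ≤ m then ((GF q (m - k)).card : ℝ) else 0)
          ≤ ∑ k ∈ Finset.range q, lam q ^ (m+1) * ((lam q)⁻¹)^(k+1) := by
            apply Finset.sum_le_sum
            intro k _
            by_cases hk : k ≤ m
            · rw [if_pos hk]
              have hpow : lam q ^ (m+1) = lam q ^ (m-k) * lam q ^(k+1) := by
                rw [← pow_add]; congr 1; omega
              have h2 : lam q ^ (m+1) * ((lam q)⁻¹)^(k+1) = lam q ^ (m-k) := by
                rw [inv_pow, hpow, mul_assoc, mul_inv_cancel₀ (by positivity), mul_one]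
              rw [h2]
              exact ih (m - k) (by omega)
            · rw [if_neg hk]; positivity
        _ = lam q ^ (m+1) * ∑ k ∈ Finset.range q, ((lam q)⁻¹)^(k+1) := by
            rw [Finset.mul_sum]
        _ ≤ lam q ^ (m+1) * 1 :=
            mul_le_mul_of_nonneg_left (lam_geom q) (by positivity)
        _ = lam q ^ (m+1) := mul_one _

noncomputable def uu (q n : ℕ) : ℝ := ((GF q n).card : ℝ) / 2 ^ n

lemma uu_nonneg (q n : ℕ) : 0 ≤ uu q n := by
  rw [uu]; positivity

lemma uu_zero (q : ℕ) (hq : 1 ≤ q) : uu q 0 = 1 := by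
  rw [uu, GF_zero_card hq]; norm_num

lemma uu_le (q : ℕ) (hq : 1 ≤ q) (n : ℕ) : uu q n ≤ (lam q / 2) ^ n := by
  rw [uu, div_pow]
  exact div_le_div_of_nonneg_right (card_GF_le q hq n) (by positivity) |>.trans_eq rfl

lemma uu_succ (q n : ℕ) :
    uu q (n+1) = ∑ k ∈ Finset.range q, (1/2:ℝ)^(k+1) * (if k ≤ n then uu q (n-k) else 0) := by
  rw [uu, GF_card_succ n, Nat.cast_sum, Finset.sum_div]
  apply Finset.sum_congr rfl
  intro k _
  by_cases hk : k ≤ n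
  · rw [if_pos hk, if_pos hk, uu]
    have hsplit : (2:ℝ) ^ (n+1) = 2^(k+1) * 2^(n-k) := by
      rw [← pow_add]; congr 1; omega
    rw [hsplit, div_pow, one_pow, div_mul_div_comm, one_mul]
  · rw [if_neg hk, if_neg hk]
    simp
lemma summable_base (q : ℕ) : Summable (fun n : ℕ => ((n:ℝ)+1)^2 * (lam q / 2)^n) := by
  have hl0 := lam_pos q
  have hr : ‖lam q / 2‖ < 1 := by
    rw [Real.norm_eq_abs, abs_of_pos (by positivity)]
    have := lam_lt_two q; linarith
  have h2 := summable_pow_mul_geometric_of_norm_lt_one 2 hr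
  have h1 := summable_pow_mul_geometric_of_norm_lt_one 1 hr
  have h0 := summable_pow_mul_geometric_of_norm_lt_one 0 hr
  apply (h2.add ((h1.mul_left 2).add h0)).congr
  intro n
  push_cast
  ring

lemma summable_wu (q : ℕ) (hq : 1 ≤ q) (g : ℕ → ℝ) (C : ℝ)
    (hg : ∀ n, |g n| ≤ C * ((n:ℝ)+1)^2) :
    Summable (fun n => g n * uu q n) := by
  apply Summable.of_norm_bounded (g := fun n : ℕ => C * (((n:ℝ)+1)^2 * (lam q/2)^n))
    ((summable_base q).mul_left C)
  intro n
  rw [Real.norm_eq_abs, abs_mul, abs_of_nonneg (uu_nonneg q n)]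
  have h1 := hg n
  have h4 : (0:ℝ) ≤ C * ((n:ℝ)+1)^2 := le_trans (abs_nonneg _) h1
  calc |g n| * uu q n ≤ (C * ((n:ℝ)+1)^2) * (lam q/2)^n :=
        mul_le_mul h1 (uu_le q hq n) (uu_nonneg q n) h4
    _ = C * (((n:ℝ)+1)^2 * (lam q/2)^n) := by ring

lemma tsum_shift (q : ℕ) (hq : 1 ≤ q) (g : ℕ → ℝ) (C : ℝ)
    (hg : ∀ n, |g n| ≤ C * ((n:ℝ)+1)^2) :
    ∑' n, g n * uu q n
      = g 0 + ∑ k ∈ Finset.range q, (1/2:ℝ)^(k+1) * ∑' n, g (n + (k+1)) * uu q n := by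
  have hC : 0 ≤ C := by
    have h := le_trans (abs_nonneg (g 0)) (hg 0)
    norm_num at h
    exact h
  have hshift : ∀ m n : ℕ, |g (n + m)| ≤ (C * ((m:ℝ)+1)^2) * ((n:ℝ)+1)^2 := by
    intro m n
    refine le_trans (hg (n+m)) ?_
    push_cast
    have key : ((n:ℝ) + (m:ℝ) + 1) ≤ ((m:ℝ)+1)*((n:ℝ)+1) := by
      nlinarith [mul_nonneg (Nat.cast_nonneg (α := ℝ) n) (Nat.cast_nonneg (α := ℝ) m)]
    have key2 : ((n:ℝ) + (m:ℝ) + 1)^2 ≤ (((m:ℝ)+1)*((n:ℝ)+1))^2 := by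
      nlinarith [key, Nat.cast_nonneg (α := ℝ) n, Nat.cast_nonneg (α := ℝ) m]
    calc C * ((n:ℝ) + (m:ℝ) + 1)^2 ≤ C * (((m:ℝ)+1)*((n:ℝ)+1))^2 :=
          mul_le_mul_of_nonneg_left key2 hC
      _ = C * ((m:ℝ)+1)^2 * ((n:ℝ)+1)^2 := by ring
  have hsum : Summable (fun n => g n * uu q n) := summable_wu q hq g C hg
  have hlam0 := lam_pos q
  set h : ℕ → ℕ → ℝ :=
    fun k n => (1/2:ℝ)^(k+1) * g (n+1) * (if k ≤ n then uu q (n-k) else 0) with hdef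
  have hinvpow : ∀ k : ℕ, ((lam q/2)^k)⁻¹ = (2/lam q)^k := by
    intro k; rw [← inv_pow, inv_div]
  have hsumh : ∀ k ∈ Finset.range q, Summable (h k) := by
    intro k _
    apply Summable.of_norm_bounded
      (g := fun n : ℕ => ((1/2:ℝ)^(k+1) * (4*C) * (2/lam q)^k) * (((n:ℝ)+1)^2 * (lam q/2)^n))
      ((summable_base q).mul_left _)
    intro n
    rw [Real.norm_eq_abs]
    simp only [hdef]
    by_cases hk : k ≤ n
    · rw [if_pos hk, abs_mul, abs_mul]
      have e1 : |(1/2:ℝ)^(k+1)| = (1/2:ℝ)^(k+1) := abs_of_pos (by positivity)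
      have e2 : |uu q (n-k)| = uu q (n-k) := abs_of_nonneg (uu_nonneg _ _)
      rw [e1, e2]
      have b1 : |g (n+1)| ≤ (4*C) * ((n:ℝ)+1)^2 := by
        refine le_trans (hg (n+1)) ?_
        push_cast
        nlinarith [Nat.cast_nonneg (α := ℝ) n, mul_nonneg hC (Nat.cast_nonneg (α := ℝ) n), hC]
      have b2 : uu q (n-k) ≤ (2/lam q)^k * (lam q/2)^n := by
        refine le_trans (uu_le q hq (n-k)) ?_
        have hp : (lam q/2)^n = (lam q/2)^(n-k) * (lam q/2)^k := by
          rw [← pow_add]; congr 1; omega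
        rw [hp, ← hinvpow, mul_comm ((lam q/2)^(n-k)) ((lam q/2)^k), ← mul_assoc,
          inv_mul_cancel₀ (by positivity : ((lam q/2):ℝ)^k ≠ 0), one_mul]
      calc (1/2:ℝ)^(k+1) * |g (n+1)| * uu q (n-k)
          ≤ (1/2:ℝ)^(k+1) * ((4*C) * ((n:ℝ)+1)^2) * ((2/lam q)^k * (lam q/2)^n) := by
            apply mul_le_mul
            · exact mul_le_mul_of_nonneg_left b1 (by positivity)
            · exact b2
            · exact uu_nonneg _ _
            · positivity
        _ = (1/2:ℝ)^(k+1) * (4*C) * (2/lam q)^k * (((n:ℝ)+1)^2 * (lam q/2)^n) := by ring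
    · rw [if_neg hk, mul_zero, abs_zero]
      positivity
  rw [Summable.tsum_eq_zero_add hsum, uu_zero q hq, mul_one]
  congr 1
  have hpt : ∀ n, g (n+1) * uu q (n+1) = ∑ k ∈ Finset.range q, h k n := by
    intro n
    rw [uu_succ, Finset.mul_sum]
    apply Finset.sum_congr rfl
    intro k _
    simp only [hdef]
    ring
  rw [tsum_congr hpt, Summable.tsum_finsetSum hsumh]
  apply Finset.sum_congr rfl
  intro k hk
  have hzero : ∀ i ∈ Finset.range k, h k i = 0 := by
    intro i hi
    simp only [hdef]
    rw [if_neg (by simp at hi; omega)]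
    ring
  have hadd := Summable.sum_add_tsum_nat_add k (hsumh k hk)
  rw [Finset.sum_eq_zero hzero, zero_add] at hadd
  rw [← hadd, ← tsum_mul_left]
  apply tsum_congr
  intro n
  simp only [hdef]
  rw [if_pos (by omega)]
  have e1 : n + k - k = n := by omega
  have e2 : n + k + 1 = n + (k+1) := by omega
  rw [e1, e2]
  ring

lemma F1sum (q : ℕ) : ∑ k ∈ Finset.range q, (1/2:ℝ)^(k+1) = 1 - (1/2:ℝ)^q := by
  induction q with
  | zero => simp
  | succ m ih => rw [Finset.sum_range_succ, ih, pow_succ]; ring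

lemma F2sum (q : ℕ) : ∑ k ∈ Finset.range q, ((k:ℝ)+1) * (1/2:ℝ)^(k+1)
    = 2 - ((q:ℝ)+2) * (1/2:ℝ)^q := by
  induction q with
  | zero => norm_num
  | succ m ih =>
    rw [Finset.sum_range_succ, ih]
    push_cast
    rw [pow_succ]
    ring

lemma F3sum (q : ℕ) : ∑ k ∈ Finset.range q, ((k:ℝ)+1)^2 * (1/2:ℝ)^(k+1)
    = 6 - ((q:ℝ)^2 + 4*(q:ℝ) + 6) * (1/2:ℝ)^q := by
  induction q with
  | zero => norm_num
  | succ m ih =>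
    rw [Finset.sum_range_succ, ih]
    push_cast
    rw [pow_succ]
    ring


/-- For `q ≥ 1`, the series `∑_{n≥0} a_{q,n}·(n+q)(n+q−1)·2^{−(n+q)}` converges and equals
`4(2^{2q+1} − (3+q)·2^q + 1)`; this is `F_{ss}(1,0)` for
`F(s,0) = ∑_{w ∈ χ(0^q)} (s/2)^{ℓ(w)+q}`. -/
theorem wordCount_second_derivative_sum (q : ℕ) (hq : 1 ≤ q) :
    HasSum (fun n : ℕ => (wordCount q n : ℝ) * ((n : ℝ) + q) * ((n : ℝ) + q - 1) / 2 ^ (n + q))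
      (4 * (2 ^ (2 * q + 1) - (3 + (q : ℝ)) * 2 ^ q + 1)) := by
  have b0 : ∀ n : ℕ, |(fun _ : ℕ => (1:ℝ)) n| ≤ 1 * ((n:ℝ)+1)^2 := by
    intro n; simp only [abs_one, one_mul]
    nlinarith [Nat.cast_nonneg (α := ℝ) n]
  have b1 : ∀ n : ℕ, |(n:ℝ)| ≤ 1 * ((n:ℝ)+1)^2 := by
    intro n
    rw [abs_of_nonneg (Nat.cast_nonneg n), one_mul]
    nlinarith [Nat.cast_nonneg (α := ℝ) n]
  have b2 : ∀ n : ℕ, |((n:ℝ))^2| ≤ 1 * ((n:ℝ)+1)^2 := by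
    intro n
    rw [abs_of_nonneg (sq_nonneg _), one_mul]
    nlinarith [Nat.cast_nonneg (α := ℝ) n]
  have hsum0 : Summable (fun n : ℕ => (1:ℝ) * uu q n) := summable_wu q hq _ 1 b0
  have hsum1 : Summable (fun n : ℕ => (n:ℝ) * uu q n) := summable_wu q hq _ 1 b1
  have hsum2 : Summable (fun n : ℕ => ((n:ℝ))^2 * uu q n) :=
    summable_wu q hq (fun n : ℕ => ((n:ℝ))^2) 1 b2
  set S0 := ∑' (n : ℕ), (1:ℝ) * uu q n with hS0def
  set S1 := ∑' (n : ℕ), (n:ℝ) * uu q n with hS1def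
  set S2 := ∑' (n : ℕ), ((n:ℝ))^2 * uu q n with hS2def
  have hux : (1/2:ℝ)^q * 2^q = 1 := by rw [← mul_pow]; norm_num
  -- the three shift equations
  have E0 := tsum_shift q hq (fun _ => (1:ℝ)) 1 b0
  have E1 := tsum_shift q hq (fun n => (n:ℝ)) 1 b1
  have E2 := tsum_shift q hq (fun n => ((n:ℝ))^2) 1 b2
  have inner1 : ∀ k : ℕ, ∑' n, ((n + (k+1) : ℕ) : ℝ) * uu q n = S1 + ((k:ℝ)+1) * S0 := by
    intro k
    have hptw : ∀ n : ℕ, ((n + (k+1) : ℕ) : ℝ) * uu q n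
        = (n:ℝ) * uu q n + ((k:ℝ)+1) * ((1:ℝ) * uu q n) := by
      intro n; push_cast; ring
    rw [tsum_congr hptw, Summable.tsum_add hsum1 (hsum0.mul_left _), tsum_mul_left]
  have inner2 : ∀ k : ℕ, ∑' n, (((n + (k+1) : ℕ) : ℝ))^2 * uu q n
      = S2 + 2*((k:ℝ)+1) * S1 + ((k:ℝ)+1)^2 * S0 := by
    intro k
    have hptw : ∀ n : ℕ, (((n + (k+1) : ℕ) : ℝ))^2 * uu q n
        = (n:ℝ)^2 * uu q n + (2*((k:ℝ)+1) * ((n:ℝ) * uu q n)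
            + ((k:ℝ)+1)^2 * ((1:ℝ) * uu q n)) := by
      intro n; push_cast; ring
    rw [tsum_congr hptw, Summable.tsum_add hsum2 ((hsum1.mul_left _).add (hsum0.mul_left _)),
      Summable.tsum_add (hsum1.mul_left _) (hsum0.mul_left _), tsum_mul_left, tsum_mul_left]
    ring
  -- closed-form equations
  have E0' : S0 = 1 + (1 - (1/2:ℝ)^q) * S0 := by
    calc S0 = 1 + ∑ k ∈ Finset.range q, (1/2:ℝ)^(k+1) * S0 := E0
      _ = 1 + (∑ k ∈ Finset.range q, (1/2:ℝ)^(k+1)) * S0 := by rw [Finset.sum_mul]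
      _ = 1 + (1 - (1/2:ℝ)^q) * S0 := by rw [F1sum]
  have hS0 : S0 = 2^q := by linear_combination (2:ℝ)^q * E0' - S0 * hux
  have E1' : S1 = (1 - (1/2:ℝ)^q) * S1 + (2 - ((q:ℝ)+2) * (1/2:ℝ)^q) * S0 := by
    have E1b := E1
    simp only [Nat.cast_zero] at E1b
    rw [show (∑ k ∈ Finset.range q, (1/2:ℝ)^(k+1) * ∑' (n:ℕ), ((n + (k+1):ℕ):ℝ) * uu q n)
        = ∑ k ∈ Finset.range q, (1/2:ℝ)^(k+1) * (S1 + ((k:ℝ)+1) * S0) from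
      Finset.sum_congr rfl (fun k _ => by rw [inner1 k])] at E1b
    have hdist1 : ∑ k ∈ Finset.range q, (1/2:ℝ)^(k+1) * (S1 + ((k:ℝ)+1)*S0)
        = (∑ k ∈ Finset.range q, (1/2:ℝ)^(k+1)) * S1
          + (∑ k ∈ Finset.range q, ((k:ℝ)+1)*(1/2:ℝ)^(k+1)) * S0 := by
      rw [Finset.sum_mul, Finset.sum_mul, ← Finset.sum_add_distrib]
      exact Finset.sum_congr rfl (fun k _ => by ring)
    rw [hdist1, F1sum, F2sum] at E1b
    linarith [E1b]
  have hS1 : S1 = (2 - ((q:ℝ)+2) * (1/2:ℝ)^q) * ((2:ℝ)^q)^2 := by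
    linear_combination (2:ℝ)^q * E1' - S1 * hux
      + (2 - ((q:ℝ)+2) * (1/2:ℝ)^q) * (2:ℝ)^q * hS0
  have E2' : S2 = (1 - (1/2:ℝ)^q) * S2 + 2 * (2 - ((q:ℝ)+2) * (1/2:ℝ)^q) * S1
      + (6 - ((q:ℝ)^2 + 4*(q:ℝ) + 6) * (1/2:ℝ)^q) * S0 := by
    have E2b := E2
    simp only [Nat.cast_zero] at E2b
    rw [show (∑ k ∈ Finset.range q, (1/2:ℝ)^(k+1) * ∑' (n:ℕ), (((n + (k+1):ℕ):ℝ))^2 * uu q n)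
        = ∑ k ∈ Finset.range q,
            (1/2:ℝ)^(k+1) * (S2 + 2*((k:ℝ)+1) * S1 + ((k:ℝ)+1)^2 * S0) from
      Finset.sum_congr rfl (fun k _ => by rw [inner2 k])] at E2b
    have hdist2 : ∑ k ∈ Finset.range q,
          (1/2:ℝ)^(k+1) * (S2 + 2*((k:ℝ)+1)*S1 + ((k:ℝ)+1)^2*S0)
        = (∑ k ∈ Finset.range q, (1/2:ℝ)^(k+1)) * S2
          + (∑ k ∈ Finset.range q, ((k:ℝ)+1)*(1/2:ℝ)^(k+1)) * (2*S1)
          + (∑ k ∈ Finset.range q, ((k:ℝ)+1)^2*(1/2:ℝ)^(k+1)) * S0 := by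
      rw [Finset.sum_mul, Finset.sum_mul, Finset.sum_mul, ← Finset.sum_add_distrib,
        ← Finset.sum_add_distrib]
      exact Finset.sum_congr rfl (fun k _ => by ring)
    rw [hdist2, F1sum, F2sum, F3sum] at E2b
    linarith [E2b]
  have hS2 : S2 = 2 * (2 - ((q:ℝ)+2) * (1/2:ℝ)^q)^2 * ((2:ℝ)^q)^3
      + (6 - ((q:ℝ)^2 + 4*(q:ℝ) + 6) * (1/2:ℝ)^q) * ((2:ℝ)^q)^2 := by
    linear_combination (2:ℝ)^q * E2' - S2 * hux
      + 2 * (2 - ((q:ℝ)+2) * (1/2:ℝ)^q) * (2:ℝ)^q * hS1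
      + (6 - ((q:ℝ)^2 + 4*(q:ℝ) + 6) * (1/2:ℝ)^q) * (2:ℝ)^q * hS0
  -- assemble the HasSum
  have hcomb : HasSum (fun n : ℕ => ((1/2:ℝ)^q * ((n:ℝ)^2 * uu q n)
        + ((2*(q:ℝ)-1) * (1/2:ℝ)^q) * ((n:ℝ) * uu q n))
        + (((q:ℝ)^2-(q:ℝ)) * (1/2:ℝ)^q) * ((1:ℝ) * uu q n))
      (((1/2:ℝ)^q * S2 + ((2*(q:ℝ)-1) * (1/2:ℝ)^q) * S1)
        + (((q:ℝ)^2-(q:ℝ)) * (1/2:ℝ)^q) * S0) :=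
    ((hsum2.hasSum.mul_left _).add (hsum1.hasSum.mul_left _)).add (hsum0.hasSum.mul_left _)
  have hfun : (fun n : ℕ => (wordCount q n : ℝ) * ((n : ℝ) + q) * ((n : ℝ) + q - 1) / 2 ^ (n + q))
      = (fun n : ℕ => ((1/2:ℝ)^q * ((n:ℝ)^2 * uu q n)
        + ((2*(q:ℝ)-1) * (1/2:ℝ)^q) * ((n:ℝ) * uu q n))
        + (((q:ℝ)^2-(q:ℝ)) * (1/2:ℝ)^q) * ((1:ℝ) * uu q n)) := by
    funext n
    rw [wordCount_eq_card_GF, uu, pow_add]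
    have h2n : ((2:ℝ)^n) ≠ 0 := by positivity
    have h2q : ((2:ℝ)^q) ≠ 0 := by positivity
    simp only [one_div, inv_pow]
    ring
  have hval : ((1/2:ℝ)^q * S2 + ((2*(q:ℝ)-1) * (1/2:ℝ)^q) * S1)
        + (((q:ℝ)^2-(q:ℝ)) * (1/2:ℝ)^q) * S0
      = 4 * (2 ^ (2 * q + 1) - (3 + (q : ℝ)) * 2 ^ q + 1) := by
    rw [hS0, hS1, hS2]
    have hpow : (2:ℝ)^(2*q+1) = 2 * ((2:ℝ)^q)^2 := by
      rw [pow_succ, two_mul, pow_add]; ring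
    rw [hpow]
    have hhalf : (1/2:ℝ)^q = ((2:ℝ)^q)⁻¹ := by rw [one_div, inv_pow]
    rw [hhalf]
    have h2q : ((2:ℝ)^q) ≠ 0 := by positivity
    field_simp
    ring
  rw [hfun, ← hval]
  exact hcomb
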